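/- Let F be a field of characteristic ≠ 2 and n < d. Then the canonical algebra homomorphism ψ: S_F(n,d) → End_{S_F(n,d)}(S_F^-(n,d)) (from the Schur algebra to the endomorphism ring of S⁻ as a right S_F(n,d)-module, given by left multiplication) fails to be injective. In particular, the element ξ_{Γ_1}, where Γ_1 is the multigraph with all d edges joining 1' to 1, satisfies ξ_{Γ_1}·S_F^-(n,d) = 0. -/

import Mathlib

/-- A `ℤ/2ℤ`-grading of a ring `AS`: a subring `S` (the even part) and an additive subgroup
`Sm` (the odd part) with `S·Sm ⊆ Sm`, `Sm·S ⊆ Sm` and `Sm·Sm ⊆ S`.  (That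
`AS = S ⊕ Sm` is imposed separately as a hypothesis.) -/
structure GradedPair (AS : Type*) [Ring AS] where
  S : Subring AS
  Sm : AddSubgroup AS
  smul_mem : ∀ s ∈ S, ∀ x ∈ Sm, s * x ∈ Sm
  mul_smem : ∀ x ∈ Sm, ∀ s ∈ S, x * s ∈ Sm
  mm_mem : ∀ x ∈ Sm, ∀ y ∈ Sm, x * y ∈ S
noncomputable section

open Equiv

variable (F : Type*) [Field F] (n d : ℕ)

/-- The tensor space `(Fⁿ)^{⊗d}`, realized as `F[I(n,d)]` with `I(n,d) = Fin d → Fin n`. -/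
abbrev TensorSpace := (Fin d → Fin n) → F

/-- `S_d`-equivariance of an endomorphism of tensor space. -/
def SCond (T : Module.End F (TensorSpace F n d)) : Prop :=
  ∀ (w : Equiv.Perm (Fin d)) (f : TensorSpace F n d) (v : Fin d → Fin n),
    T (fun u => f (u ∘ w)) v = T f (v ∘ w)

/-- Sign-twisted `S_d`-equivariance of an endomorphism of tensor space. -/
def MCond (T : Module.End F (TensorSpace F n d)) : Prop :=
  ∀ (w : Equiv.Perm (Fin d)) (f : TensorSpace F n d) (v : Fin d → Fin n),
    T (fun u => f (u ∘ w)) v = ((Equiv.Perm.sign w : ℤ) : F) * T f (v ∘ w)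

/-- The Schur algebra `S_F(n,d)` as a subring of `End((Fⁿ)^{⊗d})`. -/
def schurSubring : Subring (Module.End F (TensorSpace F n d)) where
  carrier := {T | SCond F n d T}
  one_mem' := by intro w f v; rfl
  mul_mem' := by
    intro a b ha hb w f v
    rw [Module.End.mul_apply, Module.End.mul_apply]
    have h1 : b (fun u => f (u ∘ w)) = fun u => b f (u ∘ w) := funext (hb w f)
    rw [h1]
    exact ha w (b f) v
  add_mem' := by
    intro a b ha hb w f v
    simp only [LinearMap.add_apply, Pi.add_apply, ha w f v, hb w f v]
  zero_mem' := by intro w f v; simp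
  neg_mem' := by
    intro a ha w f v
    simp only [LinearMap.neg_apply, Pi.neg_apply, ha w f v]

/-- The bimodule `S_F⁻(n,d)` as an additive subgroup of `End((Fⁿ)^{⊗d})`. -/
def schurMinusSubgroup : AddSubgroup (Module.End F (TensorSpace F n d)) where
  carrier := {T | MCond F n d T}
  add_mem' := by
    intro a b ha hb w f v
    simp only [LinearMap.add_apply, Pi.add_apply, ha w f v, hb w f v]
    ring
  zero_mem' := by intro w f v; simp
  neg_mem' := by
    intro a ha w f v
    simp only [LinearMap.neg_apply, Pi.neg_apply, ha w f v]
    ring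

lemma sign_sq (w : Equiv.Perm (Fin d)) :
    ((Equiv.Perm.sign w : ℤ) : F) * ((Equiv.Perm.sign w : ℤ) : F) = 1 := by
  rcases Int.units_eq_one_or (Equiv.Perm.sign w) with h | h <;> simp [h]

/-- The `ℤ/2ℤ`-grading `AS_F(n,d) = S_F(n,d) ⊕ S_F⁻(n,d)` of the alternating Schur algebra
inside `End((Fⁿ)^{⊗d})`. -/
def schurGradedPair : GradedPair (Module.End F (TensorSpace F n d)) where
  S := schurSubring F n d
  Sm := schurMinusSubgroup F n d
  smul_mem := by
    intro s hs x hx w f v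
    rw [Module.End.mul_apply, Module.End.mul_apply]
    have h1 : x (fun u => f (u ∘ w)) =
        ((Equiv.Perm.sign w : ℤ) : F) • fun u => x f (u ∘ w) := by
      funext u
      simpa using hx w f u
    rw [h1, map_smul]
    simp only [Pi.smul_apply, smul_eq_mul]
    rw [hs w (x f) v]
  mul_smem := by
    intro x hx s hs w f v
    rw [Module.End.mul_apply, Module.End.mul_apply]
    have h1 : s (fun u => f (u ∘ w)) = fun u => s f (u ∘ w) := funext (hs w f)
    rw [h1]
    exact hx w (s f) v
  mm_mem := by
    intro x hx y hy w f v
    rw [Module.End.mul_apply, Module.End.mul_apply]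
    have h1 : y (fun u => f (u ∘ w)) =
        ((Equiv.Perm.sign w : ℤ) : F) • fun u => y f (u ∘ w) := by
      funext u
      simpa using hy w f u
    rw [h1, map_smul]
    simp only [Pi.smul_apply, smul_eq_mul]
    rw [hx w (y f) v, ← mul_assoc, sign_sq, one_mul]

/-- The integral operator associated to the integral kernel `κ`. -/
def intOp {X Y : Type*} [Fintype Y] (κ : X → Y → F) : (Y → F) →ₗ[F] (X → F) where
  toFun f x := ∑ y, κ x y * f y
  map_add' f g := by
    funext x
    simp [mul_add, Finset.sum_add_distrib]
  map_smul' c f := by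
    funext x
    simp only [Pi.smul_apply, smul_eq_mul, RingHom.id_apply, Finset.mul_sum]
    exact Finset.sum_congr rfl (fun y _ => by ring)

open scoped Classical in
/-- The basis element `ξ_{Γ₁}` of the Schur algebra, where `Γ₁` is the bipartite multigraph
all of whose `d` edges join `1'` to `1`: the integral operator whose kernel is the indicator
of the pair of configurations having all balls in box `1`. -/
def xiGammaOne (hn : 0 < n) : Module.End F (TensorSpace F n d) :=
  intOp F (fun x y => if x = (fun _ => (⟨0, hn⟩ : Fin n)) ∧ y = (fun _ => (⟨0, hn⟩ : Fin n))
    then (1 : F) else 0)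

open scoped Classical in
lemma minus_vanish_at_const (h2 : (2 : F) ≠ 0) (hn : 0 < n) (hnd : n < d)
    (m : Module.End F (TensorSpace F n d)) (hm : MCond F n d m)
    (f : TensorSpace F n d) :
    m f (fun _ => (⟨0, hn⟩ : Fin n)) = 0 := by
  classical
  set c : Fin d → Fin n := fun _ => (⟨0, hn⟩ : Fin n) with hc
  -- first for delta functions
  have hdelta : ∀ u : Fin d → Fin n,
      m (fun v => if v = u then (1 : F) else 0) c = 0 := by
    intro u
    obtain ⟨i, j, hij, hu⟩ := Fintype.exists_ne_map_eq_of_card_lt u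
      (by simpa using hnd)
    set w := Equiv.swap i j with hw
    have huw : u ∘ w = u := by
      funext k
      simp only [Function.comp, hw, Equiv.swap_apply_def]
      split_ifs with h1 h2' <;> simp_all
    have hiff : ∀ t : Fin d → Fin n, (t ∘ w = u ↔ t = u) := by
      intro t
      constructor
      · intro h
        have ht : t = (t ∘ w) ∘ w := by
          funext k; simp [Function.comp, hw, Equiv.swap_apply_self]
        rw [ht, h, huw]
      · intro h; rw [h]; exact huw
    have hkey := hm w (fun v => if v = u then (1 : F) else 0) c
    have hL : (fun t : Fin d → Fin n => if t ∘ w = u then (1 : F) else 0)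
        = fun t => if t = u then (1 : F) else 0 := by
      funext t
      simp [hiff t]
    have hcomp : c ∘ w = c := rfl
    rw [hcomp] at hkey
    simp only [hL] at hkey
    have hsign : ((Equiv.Perm.sign w : ℤ) : F) = -1 := by
      rw [hw, Equiv.Perm.sign_swap hij]; simp
    rw [hsign] at hkey
    have h2m : (2 : F) * m (fun v => if v = u then (1 : F) else 0) c = 0 := by
      rw [two_mul]
      nth_rewrite 1 [hkey]
      ring
    exact (mul_eq_zero.mp h2m).resolve_left h2
  have hdec : f = ∑ u : Fin d → Fin n, f u • (fun v => if v = u then (1 : F) else 0) := by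
    funext v
    simp [Finset.sum_apply]
  calc m f c = m (∑ u : Fin d → Fin n, f u • (fun v => if v = u then (1 : F) else 0)) c := by
        rw [← hdec]
    _ = ∑ u : Fin d → Fin n, f u • m (fun v => if v = u then (1 : F) else 0) c := by
        rw [map_sum]
        simp [Finset.sum_apply]
    _ = 0 := by simp [hdelta]

open scoped Classical in
lemma xiGammaOne_apply (hn : 0 < n) (f : TensorSpace F n d) (v : Fin d → Fin n) :
    xiGammaOne F n d hn f v =
      if v = (fun _ => (⟨0, hn⟩ : Fin n)) then f (fun _ => (⟨0, hn⟩ : Fin n)) else 0 := by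
  classical
  simp only [xiGammaOne, intOp, LinearMap.coe_mk, AddHom.coe_mk]
  rw [Finset.sum_eq_single (fun _ => (⟨0, hn⟩ : Fin n))]
  · split_ifs <;> simp_all
  · intro b _ hb
    simp [hb]
  · simp

open scoped Classical in
lemma const_comp_iff (hn : 0 < n) (v : Fin d → Fin n) (w : Equiv.Perm (Fin d)) :
    v ∘ w = (fun _ => (⟨0, hn⟩ : Fin n)) ↔ v = fun _ => (⟨0, hn⟩ : Fin n) := by
  constructor
  · intro h
    funext k
    have := congrFun h (w.symm k)
    simpa using this
  · intro h; rw [h]; rfl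

set_option linter.unusedVariables false in
/-- for `char F ≠ 2` and `n < d`, the canonical algebra homomorphism
`ψ : S_F(n,d) → End_{S_F(n,d)}(S_F⁻(n,d))` given by left multiplication fails to be
injective: the basis element `ξ_{Γ₁}` (all `d` edges joining `1'` to `1`) is a nonzero
element of `S_F(n,d)` annihilating all of `S_F⁻(n,d)`. -/
theorem stmt_18 (h2 : (2 : F) ≠ 0) (hn : 0 < n) (hnd : n < d) :
    ¬ Function.Injective
        (fun s : (schurGradedPair F n d).S =>
          fun m : (schurGradedPair F n d).Sm =>
            (⟨(s : Module.End F (TensorSpace F n d)) * m,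
              (schurGradedPair F n d).smul_mem _ s.2 _ m.2⟩ :
                (schurGradedPair F n d).Sm)) ∧
    xiGammaOne F n d hn ∈ schurSubring F n d ∧
    xiGammaOne F n d hn ≠ 0 ∧
    ∀ m ∈ schurMinusSubgroup F n d, xiGammaOne F n d hn * m = 0 := by
  classical
  set c : Fin d → Fin n := fun _ => (⟨0, hn⟩ : Fin n) with hc
  have hS : xiGammaOne F n d hn ∈ schurSubring F n d := by
    intro w f v
    rw [xiGammaOne_apply, xiGammaOne_apply]
    by_cases hv : v = (fun _ : Fin d => (⟨0, hn⟩ : Fin n))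
    · rw [if_pos hv, if_pos ((const_comp_iff n d hn v w).2 hv)]
      rfl
    · rw [if_neg hv, if_neg (fun h => hv ((const_comp_iff n d hn v w).1 h))]
  have hne : xiGammaOne F n d hn ≠ 0 := by
    intro h
    have := congrFun (congrFun (congrArg DFunLike.coe h)
      (fun v : Fin d → Fin n => if v = c then (1 : F) else 0)) c
    rw [xiGammaOne_apply] at this
    simp [hc] at this
  have hann : ∀ m ∈ schurMinusSubgroup F n d, xiGammaOne F n d hn * m = 0 := by
    intro m hm
    apply LinearMap.ext
    intro f
    funext v
    rw [Module.End.mul_apply, xiGammaOne_apply]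
    simp only [LinearMap.zero_apply, Pi.zero_apply]
    split_ifs with h
    · exact minus_vanish_at_const F n d h2 hn hnd m hm f
    · rfl
  refine ⟨?_, hS, hne, hann⟩
  intro hinj
  have heq : (fun m : (schurGradedPair F n d).Sm =>
      (⟨(((⟨xiGammaOne F n d hn, hS⟩ : (schurGradedPair F n d).S)) :
          Module.End F (TensorSpace F n d)) * m,
        (schurGradedPair F n d).smul_mem _ hS _ m.2⟩ : (schurGradedPair F n d).Sm))
      = (fun m : (schurGradedPair F n d).Sm =>
      (⟨((0 : (schurGradedPair F n d).S) : Module.End F (TensorSpace F n d)) * m,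
        (schurGradedPair F n d).smul_mem _ (zero_mem _) _ m.2⟩ :
          (schurGradedPair F n d).Sm)) := by
    funext m
    apply Subtype.ext
    simp only [ZeroMemClass.coe_zero, zero_mul]
    exact hann m m.2
  have := hinj heq
  have hx0 : xiGammaOne F n d hn = 0 := by
    have := Subtype.ext_iff.mp this
    simpa using this
  exact hne hx0

end
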